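/- Let a > 0 and let s : (0, a) → ℝ be a differentiable function such that u·s'(u) → +∞ as u → 0 from the right. Then s(u) → −∞ as u → 0 from the right. -/

import Mathlib

/-- If `s` is differentiable on `(0, a)` (with `a > 0`) and
`u · s'(u) → +∞` as `u → 0⁺`, then `s(u) → −∞` as `u → 0⁺`. -/
theorem stmt10 (a : ℝ) (ha : 0 < a) (s : ℝ → ℝ)
    (hdiff : DifferentiableOn ℝ s (Set.Ioo 0 a))
    (hlim : Filter.Tendsto (fun u : ℝ => u * derivWithin s (Set.Ioo 0 a) u)
      (nhdsWithin 0 (Set.Ioo 0 a)) Filter.atTop) :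
    Filter.Tendsto s (nhdsWithin 0 (Set.Ioo 0 a)) Filter.atBot := by
  have hopen : IsOpen (Set.Ioo (0:ℝ) a) := isOpen_Ioo
  have h1 : ∀ᶠ u in nhdsWithin 0 (Set.Ioo 0 a),
      1 ≤ u * derivWithin s (Set.Ioo 0 a) u := hlim.eventually_ge_atTop 1
  rw [eventually_nhdsWithin_iff, Metric.eventually_nhds_iff] at h1
  obtain ⟨ε, hε, hδ⟩ := h1
  set b := min ε a with hb
  have hb0 : 0 < b := lt_min hε ha
  have hsub : Set.Ioo 0 b ⊆ Set.Ioo 0 a :=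
    Set.Ioo_subset_Ioo le_rfl (min_le_right _ _)
  have hderiv : ∀ x ∈ Set.Ioo (0:ℝ) b, 1 ≤ x * deriv s x := by
    intro x hx
    have hxa := hsub hx
    have hd : dist x 0 < ε := by
      rw [Real.dist_eq, sub_zero, abs_of_pos hx.1]
      exact lt_of_lt_of_le hx.2 (min_le_left _ _)
    have := hδ hd hxa
    rwa [derivWithin_of_isOpen hopen hxa] at this
  set g : ℝ → ℝ := fun u => s u - Real.log u with hg
  have hsdiff : ∀ x ∈ Set.Ioo (0:ℝ) b, DifferentiableAt ℝ s x := fun x hx =>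
    (hdiff x (hsub hx)).differentiableAt (hopen.mem_nhds (hsub hx))
  have hgdiff : ∀ x ∈ Set.Ioo (0:ℝ) b, DifferentiableAt ℝ g x := fun x hx =>
    (hsdiff x hx).sub (Real.differentiableAt_log (ne_of_gt hx.1))
  have hmono : MonotoneOn g (Set.Ioo 0 b) := by
    apply monotoneOn_of_deriv_nonneg (convex_Ioo 0 b)
      (fun x hx => (hgdiff x hx).continuousAt.continuousWithinAt)
    · intro x hx
      rw [interior_Ioo] at hx
      exact (hgdiff x hx).differentiableWithinAt
    · intro x hx
      rw [interior_Ioo] at hx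
      have hx0 := hx.1
      have h1x := hderiv x hx
      rw [hg, deriv_fun_sub (hsdiff x hx) (Real.differentiableAt_log (ne_of_gt hx0)),
        Real.deriv_log]
      rw [mul_comm] at h1x
      have h2 : 1 / x ≤ deriv s x := (div_le_iff₀ hx0).mpr h1x
      rw [one_div] at h2
      linarith
  have hlog : Filter.Tendsto Real.log (nhdsWithin 0 (Set.Ioo 0 a)) Filter.atBot :=
    Real.tendsto_log_nhdsGT_zero.mono_left
      (nhdsWithin_mono _ Set.Ioo_subset_Ioi_self)
  have hc : (b/2) ∈ Set.Ioo (0:ℝ) b := ⟨by linarith, by linarith⟩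
  have hev : ∀ᶠ u in nhdsWithin 0 (Set.Ioo 0 a), s u ≤ g (b/2) + Real.log u := by
    have hsmall : ∀ᶠ u in nhdsWithin 0 (Set.Ioo 0 a), u < b/2 :=
      nhdsWithin_le_nhds (Iio_mem_nhds (by linarith : (0:ℝ) < b/2))
    filter_upwards [hsmall, self_mem_nhdsWithin] with u hu hu'
    have hu2 : u ∈ Set.Ioo (0:ℝ) b := ⟨hu'.1, lt_trans hu (by linarith)⟩
    have := hmono hu2 hc (le_of_lt hu)
    simp only [hg] at this ⊢
    linarith
  exact Filter.tendsto_atBot_mono' _ hev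
    (Filter.tendsto_atBot_add_const_left _ _ hlog)
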